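/- Let G be a simple graph on a finite nonempty vertex type V and let k ≥ 1. Suppose no k-element subset of V is a dominating set of G, and moreover G has no dominating set of size at most 2k. Then in the reduction graph G', every two vertices are at distance at most 2. -/

import Mathlib

/-- `S` dominates `v` in `G` if `v ∈ S` or some element of `S` is adjacent to `v`. -/
def SimpleGraph.DominatesVert {V : Type*} (G : SimpleGraph V) (S : Finset V) (v : V) : Prop :=
  v ∈ S ∨ ∃ u ∈ S, G.Adj u v

/-- `S` is a dominating set of `G` if it dominates every vertex. -/
def SimpleGraph.IsDominatingSet {V : Type*} (G : SimpleGraph V) (S : Finset V) : Prop :=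
  ∀ v : V, G.DominatesVert S v

/-- The dominating-set-to-diameter reduction graph `G'`: its vertices are the `k`-element
subsets of `V` together with the elements of `V`; the elements of `V` form a clique; a
`k`-subset `S` is adjacent to a vertex `v ∈ V` iff `S` does not dominate `v`; two `k`-subsets
are never adjacent. -/
def SimpleGraph.reductionGraph {V : Type*} (G : SimpleGraph V) (k : ℕ) :
    SimpleGraph ({A : Finset V // A.card = k} ⊕ V) where
  Adj x y :=
    match x, y with
    | Sum.inl _, Sum.inl _ => False
    | Sum.inl S, Sum.inr v => ¬ G.DominatesVert S.1 v
    | Sum.inr v, Sum.inl S => ¬ G.DominatesVert S.1 v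
    | Sum.inr u, Sum.inr v => u ≠ v
  symm := by
    constructor
    rintro (S | u) (T | v) hadj
    · exact hadj
    · exact hadj
    · exact hadj
    · exact hadj.symm
  loopless := by
    constructor
    rintro (S | u) hadj
    · exact hadj
    · exact hadj rfl

/-- If no `k`-element subset of `V` is a dominating set of `G`, and moreover `G` has no
dominating set of size at most `2k`, then any two vertices of the reduction graph `G'` are at
distance at most `2` (in particular `G'` is connected). -/
theorem reduction_dist_le_two {V : Type*} [Fintype V] [DecidableEq V] [Nonempty V]
    (G : SimpleGraph V) (k : ℕ) (hk : 1 ≤ k)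
    (hno : ∀ A : Finset V, A.card = k → ¬ G.IsDominatingSet A)
    (hno2k : ∀ A : Finset V, A.card ≤ 2 * k → ¬ G.IsDominatingSet A) :
    (G.reductionGraph k).Connected ∧
      ∀ x y : {A : Finset V // A.card = k} ⊕ V, (G.reductionGraph k).dist x y ≤ 2 := by
  classical
  have key : ∀ x y : {A : Finset V // A.card = k} ⊕ V,
      ∃ p : (G.reductionGraph k).Walk x y, p.length ≤ 2 := by
    have hSv : ∀ (S : {A : Finset V // A.card = k}) (v : V),
        ∃ p : (G.reductionGraph k).Walk (Sum.inl S) (Sum.inr v), p.length ≤ 2 := by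
      intro S v
      obtain ⟨w, hw⟩ : ∃ w, ¬ G.DominatesVert S.1 w := by
        by_contra h
        push_neg at h
        exact hno S.1 S.2 h
      by_cases hwv : w = v
      · subst hwv
        exact ⟨SimpleGraph.Walk.cons
          (show (G.reductionGraph k).Adj (Sum.inl S) (Sum.inr w) from hw)
          SimpleGraph.Walk.nil, by simp⟩
      · exact ⟨SimpleGraph.Walk.cons
          (show (G.reductionGraph k).Adj (Sum.inl S) (Sum.inr w) from hw)
          (SimpleGraph.Walk.cons
            (show (G.reductionGraph k).Adj (Sum.inr w) (Sum.inr v) from hwv)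
            SimpleGraph.Walk.nil), by simp⟩
    rintro (S | u) (T | v)
    · by_cases hST : S = T
      · subst hST
        exact ⟨SimpleGraph.Walk.nil, by simp⟩
      · have hcard : (S.1 ∪ T.1).card ≤ 2 * k := by
          calc (S.1 ∪ T.1).card ≤ S.1.card + T.1.card := Finset.card_union_le _ _
          _ = 2 * k := by rw [S.2, T.2]; ring
        obtain ⟨w, hw⟩ : ∃ w, ¬ G.DominatesVert (S.1 ∪ T.1) w := by
          by_contra h
          push_neg at h
          exact hno2k _ hcard h
        have hwS : ¬ G.DominatesVert S.1 w := by
          intro h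
          exact hw (h.imp (fun h' => Finset.mem_union_left _ h')
            (fun ⟨u, hu, hadj⟩ => ⟨u, Finset.mem_union_left _ hu, hadj⟩))
        have hwT : ¬ G.DominatesVert T.1 w := by
          intro h
          exact hw (h.imp (fun h' => Finset.mem_union_right _ h')
            (fun ⟨u, hu, hadj⟩ => ⟨u, Finset.mem_union_right _ hu, hadj⟩))
        exact ⟨SimpleGraph.Walk.cons
          (show (G.reductionGraph k).Adj (Sum.inl S) (Sum.inr w) from hwS)
          (SimpleGraph.Walk.cons
            (show (G.reductionGraph k).Adj (Sum.inr w) (Sum.inl T) from hwT)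
            SimpleGraph.Walk.nil), by simp⟩
    · exact hSv S v
    · obtain ⟨p, hp⟩ := hSv T u
      exact ⟨p.reverse, by simpa using hp⟩
    · by_cases huv : u = v
      · subst huv; exact ⟨SimpleGraph.Walk.nil, by simp⟩
      · exact ⟨SimpleGraph.Walk.cons
          (show (G.reductionGraph k).Adj (Sum.inr u) (Sum.inr v) from huv)
          SimpleGraph.Walk.nil, by simp⟩
  refine ⟨⟨fun x y => ⟨(key x y).choose⟩⟩, fun x y => ?_⟩
  obtain ⟨p, hp⟩ := key x y
  exact le_trans (SimpleGraph.dist_le p) hp
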